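/- Let S₁, S₂, T₁, T₂ be Banach spaces with S₁ ⊕ T₁ isomorphic to S₂ ⊕ T₂, and suppose T₁ and T₂ are essentially incomparable. Then there exists a closed subspace of T₁ of finite codimension that is isomorphic to a complemented subspace of S₂. -/

import Mathlib

open Module

/-- A bounded operator between (semi)normed spaces is *Fredholm of index `k`* if it has closed
range, finite-dimensional kernel and finite-dimensional cokernel, with
`dim ker - dim coker = k`. -/
def IsFredholmOfIndex {V W : Type*} [SeminormedAddCommGroup V] [NormedSpace ℂ V]
    [SeminormedAddCommGroup W] [NormedSpace ℂ W] (T : V →L[ℂ] W) (k : ℤ) : Prop :=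
  IsClosed (LinearMap.range (T : V →ₗ[ℂ] W) : Set W) ∧ FiniteDimensional ℂ (LinearMap.ker (T : V →ₗ[ℂ] W)) ∧
    FiniteDimensional ℂ (W ⧸ LinearMap.range (T : V →ₗ[ℂ] W)) ∧
    (finrank ℂ (LinearMap.ker (T : V →ₗ[ℂ] W)) : ℤ) - finrank ℂ (W ⧸ LinearMap.range (T : V →ₗ[ℂ] W)) = k

/-- A bounded operator between (semi)normed spaces is *Fredholm* if it has closed range and
finite-dimensional kernel and cokernel. -/
def IsFredholm {V W : Type*} [SeminormedAddCommGroup V] [NormedSpace ℂ V]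
    [SeminormedAddCommGroup W] [NormedSpace ℂ W] (T : V →L[ℂ] W) : Prop :=
  IsClosed (LinearMap.range (T : V →ₗ[ℂ] W) : Set W) ∧ FiniteDimensional ℂ (LinearMap.ker (T : V →ₗ[ℂ] W)) ∧
    FiniteDimensional ℂ (W ⧸ LinearMap.range (T : V →ₗ[ℂ] W))

/-- `T ∈ B(G,H)` is *inessential* if `I_G - S T` is Fredholm for every `S ∈ B(H,G)`. -/
def Inessential {G H : Type*} [SeminormedAddCommGroup G] [NormedSpace ℂ G]
    [SeminormedAddCommGroup H] [NormedSpace ℂ H] (T : G →L[ℂ] H) : Prop :=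
  ∀ S : H →L[ℂ] G, IsFredholm (ContinuousLinearMap.id ℂ G - S.comp T)

set_option maxHeartbeats 1000000 in
/-- If `S₁ ⊕ T₁ ≅ S₂ ⊕ T₂` and `T₁, T₂` are essentially incomparable, then some
closed finite-codimensional subspace of `T₁` is isomorphic to a complemented subspace
of `S₂`. -/
theorem finite_codim_subspace_iso_complemented (S₁ : Type u) [NormedAddCommGroup S₁]
    [NormedSpace ℂ S₁] [CompleteSpace S₁]
    (S₂ : Type u) [NormedAddCommGroup S₂] [NormedSpace ℂ S₂] [CompleteSpace S₂]
    (T₁ : Type u) [NormedAddCommGroup T₁] [NormedSpace ℂ T₁] [CompleteSpace T₁]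
    (T₂ : Type u) [NormedAddCommGroup T₂] [NormedSpace ℂ T₂] [CompleteSpace T₂]
    (hiso : Nonempty ((S₁ × T₁) ≃L[ℂ] (S₂ × T₂)))
    (hinc : ∀ T : T₁ →L[ℂ] T₂, Inessential T) :
    ∃ M : Submodule ℂ T₁, IsClosed (M : Set T₁) ∧ FiniteDimensional ℂ (T₁ ⧸ M) ∧
      ∃ N : Submodule ℂ S₂, N.ClosedComplemented ∧ Nonempty (M ≃L[ℂ] N) := by
  classical
  obtain ⟨Φ⟩ := hiso
  let B : T₁ →L[ℂ] S₂ :=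
    (ContinuousLinearMap.fst ℂ S₂ T₂).comp ((Φ : (S₁ × T₁) →L[ℂ] (S₂ × T₂)).comp
      (ContinuousLinearMap.inr ℂ S₁ T₁))
  let D : T₁ →L[ℂ] T₂ :=
    (ContinuousLinearMap.snd ℂ S₂ T₂).comp ((Φ : (S₁ × T₁) →L[ℂ] (S₂ × T₂)).comp
      (ContinuousLinearMap.inr ℂ S₁ T₁))
  let G : S₂ →L[ℂ] T₁ :=
    (ContinuousLinearMap.snd ℂ S₁ T₁).comp ((Φ.symm : (S₂ × T₂) →L[ℂ] (S₁ × T₁)).comp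
      (ContinuousLinearMap.inl ℂ S₂ T₂))
  let H : T₂ →L[ℂ] T₁ :=
    (ContinuousLinearMap.snd ℂ S₁ T₁).comp ((Φ.symm : (S₂ × T₂) →L[ℂ] (S₁ × T₁)).comp
      (ContinuousLinearMap.inr ℂ S₂ T₂))
  have key : G.comp B = ContinuousLinearMap.id ℂ T₁ - H.comp D := by
    ext t
    have h1 : Φ.symm (Φ (0, t)) = (0, t) := Φ.symm_apply_apply _
    have h2 : Φ (0, t) = (B t, D t) := by
      simp only [B, D, ContinuousLinearMap.comp_apply, ContinuousLinearMap.inr_apply,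
        ContinuousLinearMap.coe_coe, ContinuousLinearMap.coe_fst',
        ContinuousLinearMap.coe_snd']
      exact Prod.mk.eta.symm
    have h3 : Φ.symm (B t, D t) = Φ.symm (B t, 0) + Φ.symm (0, D t) := by
      rw [← map_add]
      simp
    have h4 : G (B t) + H (D t) = t := by
      have h5 := congrArg Prod.snd h1
      rw [h2, h3] at h5
      simpa [G, H] using h5
    have h5 : G (B t) = t - H (D t) := eq_sub_of_add_eq h4
    simpa using h5
  let F : T₁ →L[ℂ] T₁ := G.comp B
  have hF : IsFredholm F := by
    show IsFredholm (G.comp B)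
    rw [key]
    exact hinc D H
  have hRclosed : IsClosed ((LinearMap.range (F : T₁ →ₗ[ℂ] T₁) : Submodule ℂ T₁) : Set T₁) := hF.1
  haveI : FiniteDimensional ℂ (LinearMap.ker (F : T₁ →ₗ[ℂ] T₁)) := hF.2.1
  haveI : FiniteDimensional ℂ (T₁ ⧸ LinearMap.range (F : T₁ →ₗ[ℂ] T₁)) := hF.2.2
  obtain ⟨M, hMclosed, hKM⟩ :=
    (Submodule.ClosedComplemented.of_finiteDimensional (LinearMap.ker (F : T₁ →ₗ[ℂ] T₁))).exists_isClosed_isCompl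
  haveI : CompleteSpace M := hMclosed.completeSpace_coe
  haveI : CompleteSpace (LinearMap.range (F : T₁ →ₗ[ℂ] T₁) : Submodule ℂ T₁) := hRclosed.completeSpace_coe
  refine ⟨M, hMclosed, (Submodule.quotientEquivOfIsCompl M _ hKM.symm).symm.finiteDimensional, ?_⟩
  -- the restriction of F to M, corestricted to range F
  let f : M →L[ℂ] (LinearMap.range (F : T₁ →ₗ[ℂ] T₁) : Submodule ℂ T₁) :=
    (F.comp M.subtypeL).codRestrict (LinearMap.range (F : T₁ →ₗ[ℂ] T₁))
      (fun x => LinearMap.mem_range_self _ _)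
  have hker : f.ker = ⊥ := by
    rw [eq_bot_iff]
    rintro ⟨m, hm⟩ hmk
    have h0 : F m = 0 := by
      have := congrArg (Subtype.val) (LinearMap.mem_ker.mp hmk)
      exact this
    have hm0 : m = 0 := (Submodule.disjoint_def.mp hKM.disjoint) m (LinearMap.mem_ker.mpr h0) hm
    simp only [Submodule.mem_bot]
    exact Subtype.ext hm0
  have hsurj : f.range = ⊤ := by
    rw [eq_top_iff]
    rintro ⟨y, hy⟩ -
    obtain ⟨t, ht⟩ := hy
    have htop : t ∈ (LinearMap.ker (F : T₁ →ₗ[ℂ] T₁)) ⊔ M := by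
      rw [codisjoint_iff.mp hKM.codisjoint]; trivial
    obtain ⟨k, hk, m, hm, hkm⟩ := Submodule.mem_sup.mp htop
    refine ⟨⟨m, hm⟩, ?_⟩
    apply Subtype.ext
    have hFk : F k = 0 := hk
    have : F m = y := by
      have : F (k + m) = y := by rw [hkm]; exact ht
      rw [map_add, hFk, zero_add] at this
      exact this
    exact this
  let e := ContinuousLinearEquiv.ofBijective f hker hsurj
  have hef : ∀ m : M, e m = f m := fun m =>
    congrFun (ContinuousLinearEquiv.coeFn_ofBijective f hker hsurj) m
  let b : M →L[ℂ] S₂ := B.comp M.subtypeL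
  have hGb : ∀ m : M, G (b m) = F (m : T₁) := fun m => rfl
  have hbound : ∀ m : M, ‖m‖ ≤ (‖(e.symm : (LinearMap.range (F : T₁ →ₗ[ℂ] T₁) : Submodule ℂ T₁) →L[ℂ] M)‖₊ * ‖G‖₊) * ‖b m‖ := by
    intro m
    have h1 : ‖m‖ ≤ ‖(e.symm : (LinearMap.range (F : T₁ →ₗ[ℂ] T₁) : Submodule ℂ T₁) →L[ℂ] M)‖ * ‖e m‖ := by
      calc ‖m‖ = ‖(e.symm : (LinearMap.range (F : T₁ →ₗ[ℂ] T₁) : Submodule ℂ T₁) →L[ℂ] M) (e m)‖ := by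
            rw [ContinuousLinearEquiv.coe_coe, e.symm_apply_apply]
        _ ≤ _ := ContinuousLinearMap.le_opNorm _ _
    have h2 : ‖e m‖ = ‖F (m : T₁)‖ := by rw [hef m]; rfl
    have h3 : ‖F (m : T₁)‖ ≤ ‖G‖ * ‖b m‖ := by
      rw [← hGb m]; exact G.le_opNorm _
    calc ‖m‖ ≤ ‖(e.symm : (LinearMap.range (F : T₁ →ₗ[ℂ] T₁) : Submodule ℂ T₁) →L[ℂ] M)‖ * ‖e m‖ := h1
      _ = ‖(e.symm : (LinearMap.range (F : T₁ →ₗ[ℂ] T₁) : Submodule ℂ T₁) →L[ℂ] M)‖ * ‖F (m : T₁)‖ := by rw [h2]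
      _ ≤ ‖(e.symm : (LinearMap.range (F : T₁ →ₗ[ℂ] T₁) : Submodule ℂ T₁) →L[ℂ] M)‖ * (‖G‖ * ‖b m‖) := by
          exact mul_le_mul_of_nonneg_left h3 (norm_nonneg _)
      _ = _ := by push_cast; ring
  have hanti : AntilipschitzWith
      (‖(e.symm : (LinearMap.range (F : T₁ →ₗ[ℂ] T₁) : Submodule ℂ T₁) →L[ℂ] M)‖₊ * ‖G‖₊) b :=
    b.antilipschitz_of_bound (fun m => by rw [NNReal.coe_mul]; exact hbound m)
  have hNset : ((LinearMap.range (b : M →ₗ[ℂ] S₂) : Submodule ℂ S₂) : Set S₂) = Set.range b := by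
    ext x; simp [LinearMap.mem_range, Set.mem_range]
  have hNclosed : IsClosed ((LinearMap.range (b : M →ₗ[ℂ] S₂) : Submodule ℂ S₂) : Set S₂) := by
    rw [hNset]; exact hanti.isClosed_range b.uniformContinuous
  haveI : CompleteSpace (LinearMap.range (b : M →ₗ[ℂ] S₂) : Submodule ℂ S₂) := hNclosed.completeSpace_coe
  let b' : M →L[ℂ] (LinearMap.range (b : M →ₗ[ℂ] S₂) : Submodule ℂ S₂) :=
    b.codRestrict (LinearMap.range (b : M →ₗ[ℂ] S₂)) (fun x => LinearMap.mem_range_self _ _)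
  have hker' : b'.ker = ⊥ := by
    rw [ContinuousLinearMap.ker_codRestrict]
    exact LinearMap.ker_eq_bot.mpr hanti.injective
  have hsurj' : b'.range = ⊤ := by
    rw [eq_top_iff]
    rintro ⟨y, hy⟩ -
    obtain ⟨m, hm⟩ := hy
    exact ⟨m, Subtype.ext hm⟩
  have hRcc : (LinearMap.range (F : T₁ →ₗ[ℂ] T₁) : Submodule ℂ T₁).ClosedComplemented :=
    Submodule.ClosedComplemented.of_quotient_finiteDimensional hRclosed
  obtain ⟨π, hπ⟩ := hRcc
  refine ⟨LinearMap.range (b : M →ₗ[ℂ] S₂), ⟨b'.comp (((e.symm : (LinearMap.range (F : T₁ →ₗ[ℂ] T₁) : Submodule ℂ T₁) →L[ℂ] M)).comp (π.comp G)), ?_⟩,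
    ⟨ContinuousLinearEquiv.ofBijective b' hker' hsurj'⟩⟩
  intro x
  obtain ⟨m, hm⟩ := LinearMap.range_eq_top.mp hsurj' x
  rw [← hm]
  show b' ((e.symm : (LinearMap.range (F : T₁ →ₗ[ℂ] T₁) : Submodule ℂ T₁) →L[ℂ] M) (π (G ((b' m : S₂))))) = b' m
  congr 1
  have hGx : G ((b' m : S₂)) = ((f m : (LinearMap.range (F : T₁ →ₗ[ℂ] T₁) : Submodule ℂ T₁)) : T₁) := rfl
  rw [hGx, hπ (f m), ← hef m]
  exact e.symm_apply_apply m
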